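/- Let α > 0 and β ∈ [0,1). Let g : 𝔛 → ℝ have finite sensitivity Δ(g) = sup_{x,x'} |g(x) − g(x')|. If b ≥ Δ(g)/(α − log(1−β)) and ξ has the Laplace(1) distribution (density p(z) = exp(−|z|)/2), then the mechanism Z = g(X) + b·ξ is (α,β)-differentially private: for all x, x' ∈ 𝔛 and all Borel sets A ⊆ ℝ, P(g(x) + bξ ∈ A) ≤ e^α · P(g(x') + bξ ∈ A) + β. -/

import Mathlib

open MeasureTheory

private lemma laplace_density_integrable :
    Integrable (fun z : ℝ => Real.exp (-|z|) / 2) := by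
  have h1 : IntegrableOn (fun z : ℝ => Real.exp (-|z|)) (Set.Iic 0) := by
    refine ((integrableOn_exp_Iic 0).congr_fun (fun z hz => ?_) measurableSet_Iic)
    simp only [Set.mem_Iic] at hz
    rw [abs_of_nonpos hz, neg_neg]
  have h2 : IntegrableOn (fun z : ℝ => Real.exp (-|z|)) (Set.Ioi 0) := by
    refine ((exp_neg_integrableOn_Ioi 0 one_pos).congr_fun (fun z hz => ?_) measurableSet_Ioi)
    simp only [Set.mem_Ioi] at hz
    rw [abs_of_pos hz]; simp only [neg_one_mul]
  have : IntegrableOn (fun z : ℝ => Real.exp (-|z|)) (Set.Iic 0 ∪ Set.Ioi 0) := h1.union h2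
  rw [Set.Iic_union_Ioi] at this
  exact (integrableOn_univ.mp this).div_const 2

private lemma laplace_total_mass :
    ∫⁻ z : ℝ, ENNReal.ofReal (Real.exp (-|z|) / 2) ∂volume = 1 := by
  rw [← ofReal_integral_eq_lintegral_ofReal laplace_density_integrable
        (Filter.Eventually.of_forall fun z => by positivity)]
  have : (∫ z : ℝ, Real.exp (-|z|) / 2) = (∫ z : ℝ, Real.exp (-|z|)) / 2 := by
    rw [integral_div]
  rw [this, integral_comp_abs (f := fun x => Real.exp (-x)), integral_exp_neg_Ioi_zero]
  norm_num

/-- Laplace mechanism gives (α,β)-differential privacy. -/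
theorem laplace_mechanism_approx_dp {𝔛 : Type*} (g : 𝔛 → ℝ) (Δ α β b : ℝ)
    (hα : 0 < α) (hβ0 : 0 ≤ β) (hβ1 : β < 1)
    (hΔ : ∀ x x' : 𝔛, |g x - g x'| ≤ Δ)
    (hb : b ≥ Δ / (α - Real.log (1 - β))) :
    ∀ (x x' : 𝔛) (A : Set ℝ), MeasurableSet A →
      (Measure.map (fun z => g x + b * z)
          (volume.withDensity fun z => ENNReal.ofReal (Real.exp (-|z|) / 2))) A
        ≤ ENNReal.ofReal (Real.exp α) *
            (Measure.map (fun z => g x' + b * z)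
              (volume.withDensity fun z => ENNReal.ofReal (Real.exp (-|z|) / 2))) A
          + ENNReal.ofReal β := by
  intro x x' A hA
  set f : ℝ → ENNReal := fun z => ENNReal.ofReal (Real.exp (-|z|) / 2) with hf
  set ν : Measure ℝ := volume.withDensity f with hν
  have hβ' : 0 < 1 - β := by linarith
  have hK : 0 < α - Real.log (1 - β) := by
    have : Real.log (1 - β) ≤ 0 := Real.log_nonpos (by linarith) (by linarith)
    linarith
  set K : ℝ := α - Real.log (1 - β) with hKdef
  have hΔ0 : 0 ≤ Δ := le_trans (abs_nonneg _) (hΔ x x)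
  have hb0 : 0 ≤ b := le_trans (div_nonneg hΔ0 hK.le) hb
  have hmeas : ∀ c : ℝ, Measurable (fun z : ℝ => c + b * z) :=
    fun c => (measurable_id.const_mul b).const_add c
  have hfm : Measurable f := by
    apply Measurable.ennreal_ofReal
    exact ((measurable_id.neg.comp measurable_abs).exp).div_const 2
  -- measures applied to A as set-integrals
  have happ : ∀ c : ℝ, (Measure.map (fun z => c + b * z) ν) A
      = ∫⁻ z in (fun z : ℝ => c + b * z) ⁻¹' A, f z ∂volume := by
    intro c
    rw [Measure.map_apply (hmeas c) hA, hν, withDensity_apply _ ((hmeas c) hA)]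
  -- total mass of ν is 1
  have hν1 : ∀ c : ℝ, (Measure.map (fun z => c + b * z) ν) Set.univ = 1 := by
    intro c
    rw [Measure.map_apply (hmeas c) MeasurableSet.univ, Set.preimage_univ, hν,
      withDensity_apply _ MeasurableSet.univ, Measure.restrict_univ]
    exact laplace_total_mass
  have hle1 : ∀ c : ℝ, (Measure.map (fun z => c + b * z) ν) A ≤ 1 := by
    intro c
    rw [← hν1 c]
    exact measure_mono (Set.subset_univ A)
  -- key ratio bound
  have hratio : (Measure.map (fun z => g x + b * z) ν) A
      ≤ ENNReal.ofReal (Real.exp K) * (Measure.map (fun z => g x' + b * z) ν) A := by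
    rcases eq_or_lt_of_le hb0 with hb0' | hbpos
    · -- b = 0 forces Δ = 0 hence g x = g x'
      have hΔ0' : Δ ≤ 0 := by
        by_contra h
        push_neg at h
        have := hb
        rw [ge_iff_le, div_le_iff₀ hK] at this
        nlinarith
      have hgg : g x = g x' := by
        have := hΔ x x'
        have : |g x - g x'| ≤ 0 := le_trans this hΔ0'
        have := abs_nonpos_iff.mp this
        linarith [sub_eq_zero.mp this]
      rw [hgg]
      calc (Measure.map (fun z => g x' + b * z) ν) A
          = 1 * (Measure.map (fun z => g x' + b * z) ν) A := (one_mul _).symm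
        _ ≤ ENNReal.ofReal (Real.exp K) * (Measure.map (fun z => g x' + b * z) ν) A := by
            gcongr
            rw [← ENNReal.ofReal_one]
            exact ENNReal.ofReal_le_ofReal (Real.one_le_exp hK.le)
    · -- b > 0 : translation argument
      set s : ℝ := (g x - g x') / b with hs
      have hbs : b * s = g x - g x' := mul_div_cancel₀ _ (ne_of_gt hbpos)
      have hsK : |s| ≤ K := by
        rw [hs, abs_div, abs_of_pos hbpos, div_le_iff₀ hbpos]
        calc |g x - g x'| ≤ Δ := hΔ x x'
          _ ≤ K * b := by
            rw [ge_iff_le, div_le_iff₀ hK] at hb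
            linarith
      set S1 : Set ℝ := (fun z : ℝ => g x + b * z) ⁻¹' A with hS1
      set S2 : Set ℝ := (fun z : ℝ => g x' + b * z) ⁻¹' A with hS2
      have hiff : ∀ z : ℝ, z ∈ S1 ↔ z + s ∈ S2 := by
        intro z
        simp only [hS1, hS2, Set.mem_preimage]
        have : g x' + b * (z + s) = g x + b * z := by
          rw [mul_add, hbs]; ring
        rw [this]
      have hS1m : MeasurableSet S1 := (hmeas (g x)) hA
      have hS2m : MeasurableSet S2 := (hmeas (g x')) hA
      rw [happ, happ]
      calc ∫⁻ z in S1, f z ∂volume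
          ≤ ∫⁻ z in S1, ENNReal.ofReal (Real.exp K) * f (z + s) ∂volume := by
            refine setLIntegral_mono (by
              exact (measurable_const.mul (hfm.comp (measurable_id.add_const s)))) ?_
            intro z _
            rw [hf]
            simp only
            rw [← ENNReal.ofReal_mul (Real.exp_nonneg _)]
            apply ENNReal.ofReal_le_ofReal
            rw [← mul_div_assoc]
            have key : Real.exp (-|z|) ≤ Real.exp K * Real.exp (-|z + s|) := by
              rw [← Real.exp_add]
              apply Real.exp_le_exp.mpr
              have h1 := abs_add_le z s
              linarith
            linarith
        _ = ENNReal.ofReal (Real.exp K) * ∫⁻ z in S1, f (z + s) ∂volume :=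
            lintegral_const_mul _ (hfm.comp (measurable_id.add_const s))
        _ = ENNReal.ofReal (Real.exp K) * ∫⁻ z in S2, f z ∂volume := by
            congr 1
            rw [← lintegral_indicator hS1m, ← lintegral_indicator hS2m]
            have : ∀ z : ℝ, S1.indicator (fun z => f (z + s)) z = S2.indicator f (z + s) := by
              intro z
              by_cases hz : z ∈ S1
              · rw [Set.indicator_of_mem hz, Set.indicator_of_mem ((hiff z).mp hz)]
              · rw [Set.indicator_of_notMem hz,
                  Set.indicator_of_notMem (fun h => hz ((hiff z).mpr h))]
            simp_rw [this]
            exact lintegral_add_right_eq_self (S2.indicator f) s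
  -- final arithmetic
  set t := (Measure.map (fun z => g x' + b * z) ν) A with ht
  have hexpK : Real.exp K = Real.exp α + Real.exp α * β / (1 - β) := by
    rw [hKdef, Real.exp_sub, Real.exp_log hβ']
    field_simp
    ring
  rcases le_total t (ENNReal.ofReal ((1 - β) * Real.exp (-α))) with h | h
  · calc (Measure.map (fun z => g x + b * z) ν) A
        ≤ ENNReal.ofReal (Real.exp K) * t := hratio
      _ = (ENNReal.ofReal (Real.exp α) + ENNReal.ofReal (Real.exp α * β / (1 - β))) * t := by
          rw [← ENNReal.ofReal_add (Real.exp_nonneg _) (by positivity), ← hexpK]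
      _ = ENNReal.ofReal (Real.exp α) * t + ENNReal.ofReal (Real.exp α * β / (1 - β)) * t := by
          rw [add_mul]
      _ ≤ ENNReal.ofReal (Real.exp α) * t
            + ENNReal.ofReal (Real.exp α * β / (1 - β)) * ENNReal.ofReal ((1 - β) * Real.exp (-α)) := by
          gcongr
      _ = ENNReal.ofReal (Real.exp α) * t + ENNReal.ofReal β := by
          congr 1
          rw [← ENNReal.ofReal_mul (by positivity)]
          congr 1
          rw [Real.exp_neg]
          field_simp
  · calc (Measure.map (fun z => g x + b * z) ν) A
        ≤ 1 := hle1 (g x)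
      _ = ENNReal.ofReal (1 - β) + ENNReal.ofReal β := by
          rw [← ENNReal.ofReal_add (by linarith) hβ0]
          norm_num
      _ = ENNReal.ofReal (Real.exp α) * ENNReal.ofReal ((1 - β) * Real.exp (-α))
            + ENNReal.ofReal β := by
          congr 1
          rw [← ENNReal.ofReal_mul (Real.exp_nonneg _)]
          congr 1
          rw [Real.exp_neg]
          field_simp
      _ ≤ ENNReal.ofReal (Real.exp α) * t + ENNReal.ofReal β := by
          gcongr
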